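/- Consider the workflow net N with places {i, u, d, f} and transitions t_i (consumes 1 from i, produces 1 in u and 1 in d), t_u (consumes c from u and 1 from d, produces 1 in f), and t_d (consumes 2 from d, produces 1 in d and 1 in f), where c ≥ 2. Then N is k-quasi-sound if and only if k is a positive multiple of c, and N is not structurally sound. -/

import Mathlib

structure PetriNet (P T : Type) [Fintype P] [Fintype T] where
  pre : T → P → ℕ
  post : T → P → ℕ

variable {P T : Type} [Fintype P] [Fintype T] [DecidableEq P]

namespace PetriNet

def enabled (N : PetriNet P T) (t : T) (m : P → ℕ) : Prop := ∀ p, N.pre t p ≤ m p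

def fires (N : PetriNet P T) (m m' : P → ℕ) : Prop :=
  ∃ t, N.enabled t m ∧ ∀ p, m' p = m p + N.post t p - N.pre t p

def reach (N : PetriNet P T) : (P → ℕ) → (P → ℕ) → Prop := Relation.ReflTransGen N.fires

def zfires (N : PetriNet P T) (m m' : P → ℤ) : Prop :=
  ∃ t, ∀ p, m' p = m p + (N.post t p : ℤ) - (N.pre t p : ℤ)

def zreach (N : PetriNet P T) : (P → ℤ) → (P → ℤ) → Prop := Relation.ReflTransGen N.zfires

def cfires (N : PetriNet P T) (m m' : P → ℚ) : Prop :=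
  ∃ t, ∃ l : ℚ, 0 < l ∧ l ≤ 1 ∧ (∀ p, l * (N.pre t p : ℚ) ≤ m p) ∧
    ∀ p, m' p = m p + l * ((N.post t p : ℚ) - (N.pre t p : ℚ))

def creach (N : PetriNet P T) : (P → ℚ) → (P → ℚ) → Prop := Relation.ReflTransGen N.cfires

def bounded (N : PetriNet P T) (m : P → ℕ) : Prop :=
  ∃ b : ℕ, ∀ m', N.reach m m' → ∀ p, m' p ≤ b

def zbounded (N : PetriNet P T) (m : P → ℕ) : Prop :=
  ∃ b : ℕ, ∀ m' : P → ℤ, N.zreach (fun p => (m p : ℤ)) m' → (∀ p, 0 ≤ m' p) →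
    ∀ p, m' p ≤ (b : ℤ)

def quasiLive (N : PetriNet P T) (m : P → ℕ) (t : T) : Prop :=
  ∃ m', N.reach m m' ∧ N.enabled t m'

def live (N : PetriNet P T) (m : P → ℕ) (t : T) : Prop :=
  ∀ m', N.reach m m' → N.quasiLive m' t

def freeChoice (N : PetriNet P T) : Prop :=
  ∀ s t : T, (∀ p, N.pre s p = 0 ∨ N.pre t p = 0) ∨ N.pre s = N.pre t

def edge (N : PetriNet P T) : (P ⊕ T) → (P ⊕ T) → Prop
  | Sum.inl p, Sum.inr t => 0 < N.pre t p
  | Sum.inr t, Sum.inl p => 0 < N.post t p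
  | _, _ => False

end PetriNet

/-- The marking with `k` tokens in place `p` and none elsewhere. -/
def mk1 (p : P) (k : ℕ) : P → ℕ := fun q => if q = p then k else 0

/-- The continuous marking with `k` tokens in place `p` and none elsewhere. -/
def mkQ (p : P) (k : ℚ) : P → ℚ := fun q => if q = p then k else 0

/-- `k`-soundness of a Petri net with designated initial and final places. -/
def ksoundAt (N : PetriNet P T) (i f : P) (k : ℕ) : Prop :=
  ∀ m, N.reach (mk1 i k) m → N.reach m (mk1 f k)

inductive Pl14 | i | u | d | f
deriving DecidableEq

instance instFintypePl14 : Fintype Pl14 :=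
  ⟨{Pl14.i, Pl14.u, Pl14.d, Pl14.f}, fun x => by cases x <;> simp⟩

inductive Tr14 | ti | tu | td
deriving DecidableEq

instance instFintypeTr14 : Fintype Tr14 :=
  ⟨{Tr14.ti, Tr14.tu, Tr14.td}, fun x => by cases x <;> simp⟩

def N14 (c : ℕ) : PetriNet Pl14 Tr14 where
  pre := fun t q => match t, q with
    | .ti, .i => 1
    | .tu, .u => c
    | .tu, .d => 1
    | .td, .d => 2
    | _, _ => 0
  post := fun t q => match t, q with
    | .ti, .u => 1
    | .ti, .d => 1
    | .tu, .f => 1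
    | .td, .d => 1
    | .td, .f => 1
    | _, _ => 0

namespace Aux14

/-- Marking with `a,u,d,f` tokens on the four places. -/
def M (a u d f : ℕ) : Pl14 → ℕ
  | .i => a | .u => u | .d => d | .f => f

variable {c : ℕ}

lemma fires_ti (a u d f : ℕ) :
    (N14 c).fires (M (a+1) u d f) (M a (u+1) (d+1) f) := by
  refine ⟨.ti, fun p => ?_, fun p => ?_⟩ <;> cases p <;> simp [N14, M, PetriNet.enabled]

lemma fires_tu (a u d f : ℕ) :
    (N14 c).fires (M a (u+c) (d+1) f) (M a u d (f+1)) := by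
  refine ⟨.tu, fun p => ?_, fun p => ?_⟩ <;> cases p <;> simp [N14, M, PetriNet.enabled]

lemma fires_td (a u d f : ℕ) :
    (N14 c).fires (M a u (d+2) f) (M a u (d+1) (f+1)) := by
  refine ⟨.td, fun p => ?_, fun p => ?_⟩ <;> cases p <;> simp [N14, M, PetriNet.enabled]

lemma reach_ti : ∀ n a u d f, (N14 c).reach (M (a+n) u d f) (M a (u+n) (d+n) f)
  | 0, a, u, d, f => by simpa [PetriNet.reach] using Relation.ReflTransGen.refl
  | n+1, a, u, d, f => by
      have h1 := fires_ti (c := c) (a+n) u d f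
      have h2 := reach_ti n a (u+1) (d+1) f
      rw [show u + 1 + n = u + (n+1) by ring, show d + 1 + n = d + (n+1) by ring] at h2
      rw [show a + (n+1) = a + n + 1 by ring]
      exact Relation.ReflTransGen.head h1 h2

lemma reach_tu : ∀ n a u d f, (N14 c).reach (M a (u + n*c) (d+n) f) (M a u d (f+n))
  | 0, a, u, d, f => by simpa [PetriNet.reach] using Relation.ReflTransGen.refl
  | n+1, a, u, d, f => by
      have h1 := fires_tu (c := c) a (u + n*c) (d+n) f
      have h2 := reach_tu n a u d (f+1)
      rw [show f + 1 + n = f + (n+1) by ring] at h2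
      rw [show u + (n+1)*c = u + n*c + c by ring, show d + (n+1) = d + n + 1 by ring]
      exact Relation.ReflTransGen.head h1 h2

lemma reach_td : ∀ n a u d f, (N14 c).reach (M a u (d+1+n) f) (M a u (d+1) (f+n))
  | 0, a, u, d, f => by simpa [PetriNet.reach] using Relation.ReflTransGen.refl
  | n+1, a, u, d, f => by
      have h1 := fires_td (c := c) a u (d+n) f
      have h2 := reach_td n a u d (f+1)
      rw [show f + 1 + n = f + (n+1) by ring, show d + 1 + n = d + n + 1 by ring] at h2
      rw [show d + 1 + (n+1) = d + n + 2 by ring]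
      exact Relation.ReflTransGen.head h1 h2

/-- The marking equation (transition-count invariant). -/
lemma counts {m m' : Pl14 → ℕ} (h : (N14 c).reach m m') :
    ∃ a b e : ℕ,
      m' .i + a = m .i ∧
      m' .u + c*b = m .u + a ∧
      m' .d + b + 2*e = m .d + a + e ∧
      m' .f = m .f + b + e := by
  induction h with
  | refl => exact ⟨0, 0, 0, by simp, by simp, by simp, by simp⟩
  | tail hr hf ih =>
      obtain ⟨a, b, e, h1, h2, h3, h4⟩ := ih
      obtain ⟨t, hen, heq⟩ := hf
      cases t
      · have hi := heq .i; have hu := heq .u; have hd := heq .d; have hf' := heq .f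
        have he := hen .i
        simp [N14] at hi hu hd hf' he
        exact ⟨a+1, b, e, by omega, by rw [hu]; omega, by rw [hd]; omega, by omega⟩
      · have hi := heq .i; have hu := heq .u; have hd := heq .d; have hf' := heq .f
        have he := hen .u; have he' := hen .d
        simp [N14] at hi hu hd hf' he he'
        refine ⟨a, b+1, e, by omega, ?_, by omega, by omega⟩
        rw [hu, Nat.mul_add, Nat.mul_one]
        omega
      · have hi := heq .i; have hu := heq .u; have hd := heq .d; have hf' := heq .f
        have he := hen .d
        simp [N14] at hi hu hd hf' he
        exact ⟨a, b, e+1, by omega, by omega, by omega, by omega⟩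

lemma mk1i (k : ℕ) : mk1 Pl14.i k = M k 0 0 0 := by
  funext p; cases p <;> simp [mk1, M]

lemma mk1f (k : ℕ) : mk1 Pl14.f k = M 0 0 0 k := by
  funext p; cases p <;> simp [mk1, M]

lemma dead (hc : 2 ≤ c) (g : ℕ) : ∀ x, ¬ (N14 c).fires (M 0 0 1 g) x := by
  rintro x ⟨t, hen, -⟩
  cases t
  · simpa [N14, M] using hen .i
  · have := hen .u; simp [N14, M] at this; omega
  · simpa [N14, M] using hen .d

end Aux14

theorem stmt14 (c : ℕ) (hc : 2 ≤ c) :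
    (∀ k : ℕ, ((N14 c).reach (mk1 Pl14.i k) (mk1 Pl14.f k) ∧ 1 ≤ k ↔
      ∃ m : ℕ, 1 ≤ m ∧ k = m * c)) ∧
    ¬ ∃ k : ℕ, 1 ≤ k ∧ ksoundAt (N14 c) Pl14.i Pl14.f k := by
  open Aux14 in
  have key : ∀ k, (N14 c).reach (mk1 Pl14.i k) (mk1 Pl14.f k) → 1 ≤ k →
      ∃ m : ℕ, 1 ≤ m ∧ k = m * c := by
    intro k hr hk
    rw [mk1i, mk1f] at hr
    obtain ⟨a, b, e, h1, h2, h3, h4⟩ := counts hr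
    simp [M] at h1 h2 h3 h4
    refine ⟨b, ?_, ?_⟩
    · rcases Nat.eq_zero_or_pos b with hb | hb
      · subst hb; simp at h2; omega
      · exact hb
    · rw [Nat.mul_comm]; omega
  have build : ∀ m : ℕ, 1 ≤ m → (N14 c).reach (mk1 Pl14.i (m*c)) (mk1 Pl14.f (m*c)) := by
    intro m hm
    set k := m * c with hk
    have h2m : 2*m ≤ k := by
      calc 2*m = m*2 := by ring
        _ ≤ m*c := Nat.mul_le_mul_left m hc
    rw [mk1i, mk1f]
    have s1 : (N14 c).reach (M k 0 0 0) (M 0 k k 0) := by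
      simpa using reach_ti (c := c) k 0 0 0 0
    have s2 : (N14 c).reach (M 0 k k 0) (M 0 k m (k-m)) := by
      have := reach_td (c := c) (k-m) 0 k (m-1) 0
      rw [show m - 1 + 1 = m by omega, show m + (k-m) = k by omega] at this
      simpa using this
    have s3 : (N14 c).reach (M 0 k m (k-m)) (M 0 0 0 k) := by
      have := reach_tu (c := c) m 0 0 0 (k-m)
      rw [show (0:ℕ) + m*c = k by omega] at this
      simpa [show k - m + m = k by omega] using this
    exact (s1.trans s2).trans s3
  constructor
  · intro k
    constructor
    · rintro ⟨hr, hk⟩; exact key k hr hk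
    · rintro ⟨m, hm, rfl⟩
      refine ⟨build m hm, ?_⟩
      have : 1 * 2 ≤ m * c := Nat.mul_le_mul hm hc
      omega
  · rintro ⟨k, hk, hsound⟩
    have hr0 : (N14 c).reach (mk1 Pl14.i k) (mk1 Pl14.f k) :=
      hsound _ Relation.ReflTransGen.refl
    obtain ⟨m, hm, hkm⟩ := key k hr0 hk
    have h2m : 2*m ≤ k := by
      calc 2*m = m*2 := by ring
        _ ≤ m*c := Nat.mul_le_mul_left m hc
        _ = k := hkm.symm
    -- run to the deadlock marking M 0 0 1 (k-1)
    have s1 : (N14 c).reach (M k 0 0 0) (M 0 k k 0) := by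
      simpa using reach_ti (c := c) k 0 0 0 0
    have s2 : (N14 c).reach (M 0 k k 0) (M 0 0 (k-m) m) := by
      have := reach_tu (c := c) m 0 0 (k-m) 0
      rw [show (0:ℕ) + m*c = k by omega, show k - m + m = k by omega] at this
      simpa using this
    have s3 : (N14 c).reach (M 0 0 (k-m) m) (M 0 0 1 (k-1)) := by
      have := reach_td (c := c) (k - m - 1) 0 0 0 m
      rw [show (0:ℕ) + 1 + (k - m - 1) = k - m by omega,
        show m + (k - m - 1) = k - 1 by omega] at this
      simpa using this
    have hreach : (N14 c).reach (mk1 Pl14.i k) (M 0 0 1 (k-1)) := by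
      rw [mk1i]; exact (s1.trans s2).trans s3
    have hfin := hsound _ hreach
    rcases hfin.cases_head with heq | ⟨y, hy, -⟩
    · have := congrFun heq Pl14.d
      simp [mk1, M] at this
    · exact dead hc (k-1) y hy
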